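/- The function x ↦ ReLU(x) - SiLU(x) = max(x,0) - x·σ(x) is bounded in absolute value by 0.2785 on all of ℝ, and it attains its supremum; moreover |max(x,0) - x·σ(x)| = |x|·σ(-|x|) for all x. -/
import Mathlib

noncomputable def sigmoid (x : ℝ) : ℝ := 1 / (1 + Real.exp (-x))
noncomputable def SiLU (x : ℝ) : ℝ := x * sigmoid x
noncomputable def ReLU (x : ℝ) : ℝ := max x 0

lemma exp_num : (3.5907 : ℝ) ≤ Real.exp 1.2785 := by
  have h := Real.sum_le_exp_of_nonneg (x := 1.2785) (by norm_num) 13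
  refine le_trans ?_ h
  norm_num [Finset.sum_range_succ, Nat.factorial]

lemma key (t : ℝ) : t / (1 + Real.exp t) ≤ 0.2785 := by
  have hc : (0:ℝ) < 0.2785 := by norm_num
  have he : (0:ℝ) < Real.exp t := Real.exp_pos t
  rw [div_le_iff₀ (by positivity)]
  have h1 : (t + Real.log 0.2785) + 1 ≤ Real.exp (t + Real.log 0.2785) :=
    Real.add_one_le_exp _
  rw [Real.exp_add, Real.exp_log hc] at h1
  have h2 : (-1.2785 : ℝ) ≤ Real.log 0.2785 := by
    rw [Real.le_log_iff_exp_le hc, show (-1.2785:ℝ) = -(1.2785) by norm_num,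
      Real.exp_neg]
    calc (Real.exp 1.2785)⁻¹ ≤ (3.5907:ℝ)⁻¹ :=
          inv_anti₀ (by norm_num) exp_num
      _ ≤ 0.2785 := by norm_num
  nlinarith

lemma idabs (x : ℝ) : |ReLU x - SiLU x| = |x| / (1 + Real.exp |x|) := by
  have hne : ∀ y : ℝ, (1 + Real.exp y) ≠ 0 := fun y => by positivity
  rcases le_or_gt 0 x with h | h
  · rw [abs_of_nonneg h]
    have heq : ReLU x - SiLU x = x / (1 + Real.exp x) := by
      simp only [ReLU, SiLU, sigmoid, max_eq_left h, Real.exp_neg]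
      have h0 := (Real.exp_pos x).ne'
      field_simp
      ring
    rw [heq, abs_of_nonneg (by positivity)]
  · have hx : ReLU x = 0 := by simp [ReLU]; linarith
    rw [abs_of_neg h, hx]
    have heq : SiLU x = x / (1 + Real.exp (-x)) := by
      simp [SiLU, sigmoid]; ring
    rw [heq, zero_sub, abs_neg, abs_of_nonpos (by
      apply div_nonpos_of_nonpos_of_nonneg h.le (by positivity)), neg_div]

theorem relu_sub_silu_bounded :
    (∀ x : ℝ, |ReLU x - SiLU x| ≤ 0.2785) ∧
    (∃ x₀ : ℝ, ∀ x : ℝ, |ReLU x - SiLU x| ≤ |ReLU x₀ - SiLU x₀|) ∧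
    (∀ x : ℝ, |ReLU x - SiLU x| = |x| * sigmoid (-|x|)) := by
  refine ⟨fun x => ?_, ?_, fun x => ?_⟩
  · rw [idabs]; exact key _
  · -- attainment
    have hcont : Continuous fun x : ℝ => |ReLU x - SiLU x| := by
      apply Continuous.abs
      apply Continuous.sub
      · exact continuous_id.max continuous_const
      · exact continuous_id.mul (continuous_const.div
          (continuous_const.add (Real.continuous_exp.comp continuous_neg))
          (fun y => by positivity))
    obtain ⟨x₀, hx₀mem, hx₀⟩ := (isCompact_Icc (a := (-12:ℝ)) (b := 12)).exists_isMaxOn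
      ⟨1, by norm_num⟩ hcont.continuousOn
    refine ⟨x₀, fun x => ?_⟩
    rcases le_or_gt (|x|) 12 with hx | hx
    · exact hx₀ (Set.mem_Icc.mpr (abs_le.mp hx))
    · have h1 : |ReLU 1 - SiLU 1| ≤ |ReLU x₀ - SiLU x₀| := hx₀ (Set.mem_Icc.mpr (by norm_num))
      refine le_trans ?_ h1
      rw [idabs, idabs]
      have hx0 : (0:ℝ) < |x| := by linarith
      -- exp|x| ≥ |x|^2/3
      have h3 := Real.add_one_le_exp (|x| / 3)
      have hcube : Real.exp |x| = (Real.exp (|x| / 3)) ^ 3 := by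
        rw [← Real.exp_nat_mul]; push_cast; ring_nf
      have hexp : |x| ^ 2 / 3 ≤ Real.exp |x| := by
        have hp := pow_le_pow_left₀ (by positivity : (0:ℝ) ≤ |x| / 3 + 1) h3 3
        rw [hcube]; nlinarith [abs_nonneg x, hp]
      have hle : |x| / (1 + Real.exp |x|) ≤ 3 / |x| := by
        rw [div_le_div_iff₀ (by positivity) hx0]
        nlinarith
      have he1 : Real.exp 1 < 2.7182818286 := Real.exp_one_lt_d9
      have : |(1:ℝ)| / (1 + Real.exp |1|) = 1 / (1 + Real.exp 1) := by norm_num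
      rw [this]
      have : (3:ℝ) / |x| < 1 / (1 + Real.exp 1) := by
        rw [div_lt_div_iff₀ hx0 (by positivity)]
        nlinarith
      linarith
  · rw [idabs]
    simp only [sigmoid, neg_neg]
    ring
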